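/- Let p be a prime and m ≥ 1. The binomial coefficients binom(m,0), …, binom(m,m) are all nonzero modulo p if and only if b < p, where m+1 = pᵃ·b is the factorization of m+1 with gcd(b,p) = 1. (Consequence of the identity lcm{binom(m,0),…,binom(m,m)} = lcm{1,…,m+1}/(m+1).) -/
import Mathlib

private lemma mod_mul_sub_one {N c : ℕ} (hN : 2 ≤ N) (hc : 1 ≤ c) :
    (N * c - 1) % N = N - 1 := by
  have h : N * c = N * (c - 1) + N := by
    rw [← Nat.mul_succ]; congr 1; omega
  have h2 : N * c - 1 = N - 1 + N * (c - 1) := by omega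
  rw [h2, Nat.add_mul_mod_self_left, Nat.mod_eq_of_lt (by omega)]

/-- for a prime `p` and `m ≥ 1`, writing `m+1 = pᵃ·b` with `p ∤ b`:
all binomial coefficients `binom(m,0), …, binom(m,m)` are nonzero modulo `p`
iff `b < p`. -/
theorem stmt19 (p m a b : ℕ) (hp : p.Prime) (hm : 1 ≤ m)
    (hfact : m + 1 = p ^ a * b) (hb : ¬ p ∣ b) :
    (∀ k : ℕ, k ≤ m → ¬ p ∣ m.choose k) ↔ b < p := by
  have hp2 : 2 ≤ p := hp.two_le
  have hb1 : 1 ≤ b := Nat.pos_of_ne_zero (by rintro rfl; exact hb (dvd_zero p))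
  have hpa : 1 ≤ p ^ a := Nat.one_le_pow _ _ (by omega)
  constructor
  · -- all not divisible → b < p
    intro h
    by_contra hlt
    push_neg at hlt
    set r := b % p with hr
    have hr1 : 1 ≤ r := Nat.pos_of_ne_zero (fun h0 => hb (Nat.dvd_of_mod_eq_zero h0))
    have hrp : r < p := Nat.mod_lt _ (by omega)
    have hq : 1 ≤ b / p := (Nat.one_le_div_iff (by omega)).2 hlt
    set k := r * p ^ a with hk
    have hkm : k ≤ m := by
      have h1 : r ≤ b - 1 := by omega
      have h2 : k ≤ (b - 1) * p ^ a := Nat.mul_le_mul h1 le_rfl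
      have h3 : (b - 1) * p ^ a + p ^ a = b * p ^ a := by
        rw [← Nat.succ_mul]; congr 1; omega
      have h4 : b * p ^ a = p ^ a * b := mul_comm _ _
      omega
    refine h k hkm ?_
    -- show p ∣ choose m k via a carry at position a+1
    have hB : Nat.log p m < max (Nat.log p m + 1) (a + 2) := by omega
    have hmult := hp.emultiplicity_choose hkm hB
    have hkey : p ^ a * b = p ^ (a + 1) * (b / p) + k := by
      conv_lhs => rw [← Nat.div_add_mod b p]
      rw [Nat.mul_add, pow_succ, ← hr, hk]
      ring
    have hN2 : 2 ≤ p ^ (a + 1) := le_trans hp2 (Nat.le_self_pow (by omega) p)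
    have hmk : m - k = p ^ (a + 1) * (b / p) - 1 := by omega
    have hmkmod : (m - k) % p ^ (a + 1) = p ^ (a + 1) - 1 := by
      rw [hmk]; exact mod_mul_sub_one hN2 hq
    have hkN : k < p ^ (a + 1) := by
      have : k ≤ (p - 1) * p ^ a := Nat.mul_le_mul (by omega) le_rfl
      have h5 : (p - 1) * p ^ a + p ^ a = p * p ^ a := by
        rw [← Nat.succ_mul]; congr 1; omega
      have h6 : p ^ (a + 1) = p * p ^ a := by rw [pow_succ]; ring
      omega
    have hka : p ^ a ≤ k := Nat.le_mul_of_pos_left _ hr1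
    have hmem : a + 1 ∈ Finset.filter
        (fun i => p ^ i ≤ k % p ^ i + (m - k) % p ^ i)
        (Finset.Ico 1 (max (Nat.log p m + 1) (a + 2))) := by
      refine Finset.mem_filter.2 ⟨Finset.mem_Ico.2 ⟨by omega, by omega⟩, ?_⟩
      rw [Nat.mod_eq_of_lt hkN, hmkmod]
      omega
    have hne : emultiplicity p (m.choose k) ≠ 0 := by
      rw [hmult]
      simp only [ne_eq, Nat.cast_eq_zero, Finset.card_eq_zero]
      exact Finset.ne_empty_of_mem hmem
    by_contra hnd
    exact hne (emultiplicity_eq_zero.2 hnd)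
  · -- b < p → all not divisible
    intro hbp k hk
    have hmult := hp.emultiplicity_choose hk (lt_add_one (Nat.log p m))
    have hzero : emultiplicity p (m.choose k) = 0 := by
      rw [hmult]
      norm_cast
      rw [Finset.card_eq_zero, Finset.filter_eq_empty_iff]
      intro i hi
      rw [Finset.mem_Ico] at hi
      intro hle
      have hNpos : 1 ≤ p ^ i := Nat.one_le_pow _ _ (by omega)
      have hN2 : 2 ≤ p ^ i := le_trans hp2 (Nat.le_self_pow (by omega) p)
      have hkN : k % p ^ i < p ^ i := Nat.mod_lt _ (by omega)
      have hmkN : (m - k) % p ^ i < p ^ i := Nat.mod_lt _ (by omega)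
      have h3 : (k % p ^ i + (m - k) % p ^ i) % p ^ i = m % p ^ i := by
        rw [← Nat.add_mod]; congr 1; omega
      have hsub : (k % p ^ i + (m - k) % p ^ i) % p ^ i
          = k % p ^ i + (m - k) % p ^ i - p ^ i := by
        rw [Nat.mod_eq_sub_mod hle, Nat.mod_eq_of_lt (by omega)]
      rcases le_or_gt i a with hia | hia
      · -- i ≤ a : m % p^i = p^i - 1, so no carry possible
        have hsplit : p ^ a = p ^ i * p ^ (a - i) := by
          rw [← pow_add]; congr 1; omega
        have hc : 1 ≤ p ^ (a - i) * b :=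
          Nat.mul_pos (Nat.one_le_pow _ _ (by omega)) hb1
        have hmmod : m % p ^ i = p ^ i - 1 := by
          have hm' : m = p ^ i * (p ^ (a - i) * b) - 1 := by
            rw [← mul_assoc, ← hsplit]; omega
          rw [hm']; exact mod_mul_sub_one hN2 hc
        omega
      · -- a < i : m < p^i, no carry possible
        have h7 : p ^ a * (b + 1) ≤ p ^ a * p := Nat.mul_le_mul le_rfl (by omega)
        have h8 : p ^ a * (b + 1) = p ^ a * b + p ^ a := by ring
        have h9 : p ^ a * p = p ^ (a + 1) := (pow_succ p a).symm
        have h10 : p ^ (a + 1) ≤ p ^ i := Nat.pow_le_pow_right (by omega) (by omega)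
        have hmN : m < p ^ i := by omega
        have : k % p ^ i = k := Nat.mod_eq_of_lt (by omega)
        have : (m - k) % p ^ i = m - k := Nat.mod_eq_of_lt (by omega)
        omega
    exact emultiplicity_eq_zero.1 hzero
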